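/- For any positive time steps τ_1, …, τ_N, the DOC kernels satisfy Σ_{j=1}^n θ^{(n)}_{n−j} = τ_n for every 1 ≤ n ≤ N, and consequently Σ_{k=1}^n Σ_{j=1}^k θ^{(k)}_{k−j} = t_n for every 1 ≤ n ≤ N. -/

import Mathlib

open Finset

/-- BDF2 convolution kernels `b^{(n)}_j` built from the step sizes `τ`. -/
noncomputable def bdf2 (τ : ℕ → ℝ) (n j : ℕ) : ℝ :=
  if n = 1 then (if j = 0 then 1 / τ 1 else 0)
  else if j = 0 then (1 + 2 * (τ n / τ (n - 1))) / (τ n * (1 + τ n / τ (n - 1)))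
  else if j = 1 then -(τ n / τ (n - 1)) ^ 2 / (τ n * (1 + τ n / τ (n - 1)))
  else 0

/-- DOC kernels: `doc τ n g = θ^{(n)}_g`, defined by the recursive procedure
`θ^{(n)}_0 = 1/b^{(n)}_0`, `θ^{(n)}_{n-k} = -(1/b^{(k)}_0) ∑_{j=k+1}^n θ^{(n)}_{n-j} b^{(j)}_{j-k}`. -/
noncomputable def doc (τ : ℕ → ℝ) (n : ℕ) : ℕ → ℝ
  | 0 => 1 / bdf2 τ n 0
  | (g + 1) =>
    -(1 / bdf2 τ (n - (g + 1)) 0) *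
      ∑ i ∈ (Finset.range (g + 1)).attach,
        doc τ n i.1 * bdf2 τ (n - i.1) (g + 1 - i.1)
  decreasing_by exact Finset.mem_range.mp i.2

/-- The variable-step BDF2 formula `D_2 v^n = ∑_{k=1}^n b^{(n)}_{n-k} (v^k - v^{k-1})`. -/
noncomputable def D2 {V : Type*} [AddCommGroup V] [Module ℝ V]
    (τ : ℕ → ℝ) (v : ℕ → V) (n : ℕ) : V :=
  ∑ k ∈ Finset.Icc 1 n, bdf2 τ n (n - k) • (v k - v (k - 1))

/-- Time levels `t_n = τ_1 + ⋯ + τ_n`. -/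
noncomputable def tlv (τ : ℕ → ℝ) (n : ℕ) : ℝ := ∑ i ∈ Finset.Icc 1 n, τ i

lemma doc_succ' (τ : ℕ → ℝ) (n g : ℕ) :
    doc τ n (g + 1) = -(1 / bdf2 τ (n - (g + 1)) 0) *
      ∑ i ∈ Finset.range (g + 1), doc τ n i * bdf2 τ (n - i) (g + 1 - i) := by
  rw [doc, ← Finset.sum_attach (Finset.range (g+1)) (fun i => doc τ n i * bdf2 τ (n - i) (g + 1 - i))]

lemma doc_zero' (τ : ℕ → ℝ) (n : ℕ) : doc τ n 0 = 1 / bdf2 τ n 0 := by rw [doc]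

lemma bdf2_zero' (τ : ℕ → ℝ) (n j : ℕ) (hj : 2 ≤ j) : bdf2 τ n j = 0 := by
  unfold bdf2
  have h0 : j ≠ 0 := by omega
  have h1 : j ≠ 1 := by omega
  simp [h0, h1]

lemma b0_pos' (N : ℕ) (τ : ℕ → ℝ) (hτ : ∀ k, 1 ≤ k → k ≤ N → 0 < τ k) :
    ∀ k, 1 ≤ k → k ≤ N → 0 < bdf2 τ k 0 := by
  intro k hk hkN
  rcases eq_or_ne k 1 with rfl | h
  · simp [bdf2]
    exact hτ 1 le_rfl hkN
  · have hk2 : 2 ≤ k := by omega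
    have ha : 0 < τ (k-1) := hτ _ (by omega) (by omega)
    have hb : 0 < τ k := hτ _ (by omega) hkN
    have hr : 0 < τ k / τ (k-1) := div_pos hb ha
    unfold bdf2
    rw [if_neg h, if_pos rfl]
    apply div_pos <;> positivity

lemma brow' (N : ℕ) (τ : ℕ → ℝ) (hτ : ∀ k, 1 ≤ k → k ≤ N → 0 < τ k) :
    ∀ j, 1 ≤ j → j ≤ N → ∑ k ∈ Finset.Icc 1 j, bdf2 τ j (j - k) * τ k = 1 := by
  intro j hj hjN
  rcases eq_or_ne j 1 with rfl | h
  · have := (hτ 1 le_rfl hjN).ne'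
    simp [bdf2]
    field_simp
  · obtain ⟨m, rfl⟩ : ∃ m, j = m + 2 := ⟨j - 2, by omega⟩
    rw [Finset.sum_Icc_succ_top (by omega), Finset.sum_Icc_succ_top (by omega)]
    have hz : ∑ k ∈ Finset.Icc 1 m, bdf2 τ (m+2) (m + 2 - k) * τ k = 0 := by
      apply Finset.sum_eq_zero
      intro k hk
      rw [Finset.mem_Icc] at hk
      rw [bdf2_zero' τ _ _ (by omega), zero_mul]
    rw [hz, zero_add]
    have ha : 0 < τ (m+1) := hτ _ (by omega) (by omega)
    have hb : 0 < τ (m+2) := hτ _ (by omega) (by omega)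
    have h1 : m + 2 - (m+1) = 1 := by omega
    have h2 : m + 2 - (m+2) = 0 := by omega
    have h3 : m + 2 - 1 = m + 1 := by omega
    rw [h1, h2]
    unfold bdf2
    rw [if_neg (by omega : ¬ m+2 = 1), if_neg (by omega : ¬ m+2 = 1)]
    simp only [if_pos rfl, if_neg one_ne_zero, h3]
    have hr : 0 < τ (m+2) / τ (m+1) := div_pos hb ha
    have hd : τ (m+2) * (1 + τ (m+2) / τ (m+1)) ≠ 0 := by positivity
    simp only [↓reduceIte, zero_ne_one, if_false, if_true]
    field_simp
    ring

lemma inv' (N : ℕ) (τ : ℕ → ℝ) (hτ : ∀ k, 1 ≤ k → k ≤ N → 0 < τ k) :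
    ∀ n k, 1 ≤ k → k ≤ n → n ≤ N →
      ∑ j ∈ Finset.Icc k n, doc τ n (n - j) * bdf2 τ j (j - k) =
        if n = k then 1 else 0 := by
  intro n k hk hkn hnN
  rcases eq_or_ne n k with rfl | hne
  · rw [Finset.Icc_self, Finset.sum_singleton, Nat.sub_self, doc_zero', if_pos rfl,
      one_div, inv_mul_cancel₀ (b0_pos' N τ hτ n hk hnN).ne']
  · rw [if_neg hne]
    have hkn' : k < n := lt_of_le_of_ne hkn (Ne.symm hne)
    obtain ⟨g, hg⟩ : ∃ g, n - k = g + 1 := ⟨n - k - 1, by omega⟩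
    -- split bottom term
    have hsplit : Finset.Icc k n = insert k (Finset.Icc (k+1) n) := by
      ext a
      simp only [Finset.mem_Icc, Finset.mem_insert]
      omega
    rw [hsplit, Finset.sum_insert (by simp)]
    have hre : ∑ j ∈ Finset.Icc (k+1) n, doc τ n (n - j) * bdf2 τ j (j - k) =
        ∑ i ∈ Finset.range (g + 1), doc τ n i * bdf2 τ (n - i) (g + 1 - i) := by
      apply Finset.sum_nbij' (i := fun j => n - j) (j := fun i => n - i)
      · intro a ha; rw [Finset.mem_Icc] at ha; rw [Finset.mem_range]; omega
      · intro a ha; rw [Finset.mem_range] at ha; rw [Finset.mem_Icc]; omega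
      · intro a ha; rw [Finset.mem_Icc] at ha; omega
      · intro a ha; rw [Finset.mem_range] at ha; omega
      · intro a ha; rw [Finset.mem_Icc] at ha
        have e1 : n - (n - a) = a := by omega
        have e2 : g + 1 - (n - a) = a - k := by omega
        rw [e1, e2]
    rw [hre]
    have hdoc := doc_succ' τ n g
    have hk0 : n - (g + 1) = k := by omega
    rw [hk0] at hdoc
    have hb : bdf2 τ k 0 ≠ 0 := (b0_pos' N τ hτ k hk (by omega)).ne'
    rw [hg, Nat.sub_self, hdoc]
    field_simp
    ring

lemma tri' (n : ℕ) (F : ℕ → ℕ → ℝ) :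
    ∑ j ∈ Finset.Icc 1 n, ∑ k ∈ Finset.Icc 1 j, F j k =
      ∑ k ∈ Finset.Icc 1 n, ∑ j ∈ Finset.Icc k n, F j k := by
  have h := Finset.sum_Ico_Ico_comm 1 (n+1) (fun k j => F j k)
  simp only [Finset.Ico_add_one_right_eq_Icc] at h
  rw [← h]


/-- `∑_{j=1}^n θ^{(n)}_{n-j} = τ_n` and `∑_{k=1}^n ∑_{j=1}^k θ^{(k)}_{k-j} = t_n`. -/
theorem doc_row_sums
    (N : ℕ) (τ : ℕ → ℝ) (hτ : ∀ k, 1 ≤ k → k ≤ N → 0 < τ k) :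
    (∀ n, 1 ≤ n → n ≤ N → ∑ j ∈ Finset.Icc 1 n, doc τ n (n - j) = τ n) ∧
    (∀ n, 1 ≤ n → n ≤ N →
      ∑ k ∈ Finset.Icc 1 n, ∑ j ∈ Finset.Icc 1 k, doc τ k (k - j) = tlv τ n) := by
  have main : ∀ n, 1 ≤ n → n ≤ N → ∑ j ∈ Finset.Icc 1 n, doc τ n (n - j) = τ n := by
    intro n hn hnN
    calc ∑ j ∈ Finset.Icc 1 n, doc τ n (n - j)
        = ∑ j ∈ Finset.Icc 1 n, ∑ k ∈ Finset.Icc 1 j,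
            doc τ n (n - j) * bdf2 τ j (j - k) * τ k := by
          apply Finset.sum_congr rfl
          intro j hj
          rw [Finset.mem_Icc] at hj
          simp only [mul_assoc, ← Finset.mul_sum]
          rw [brow' N τ hτ j hj.1 (le_trans hj.2 hnN), mul_one]
      _ = ∑ k ∈ Finset.Icc 1 n, ∑ j ∈ Finset.Icc k n,
            doc τ n (n - j) * bdf2 τ j (j - k) * τ k := tri' n _
      _ = ∑ k ∈ Finset.Icc 1 n, (if n = k then 1 else 0) * τ k := by
          apply Finset.sum_congr rfl
          intro k hk
          rw [Finset.mem_Icc] at hk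
          rw [← Finset.sum_mul, inv' N τ hτ n k hk.1 hk.2 hnN]
      _ = τ n := by
          simp only [ite_mul, one_mul, zero_mul]
          rw [Finset.sum_ite_eq (Finset.Icc 1 n) n τ,
            if_pos (Finset.mem_Icc.mpr ⟨hn, le_rfl⟩)]
  refine ⟨main, fun n hn hnN => ?_⟩
  unfold tlv
  apply Finset.sum_congr rfl
  intro k hk
  rw [Finset.mem_Icc] at hk
  exact main k hk.1 (le_trans hk.2 hnN)
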